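/- Let (δ, R) be a (1−α) P-certified decision with respect to the decision-maker's model 𝓜_DM (i.e., P{L(δ(Y), θ) ≤ R(Y)} ≥ 1 − α for every (θ, P) ∈ 𝓜_DM). Fix u ∈ [0,1] and a default cost C ∈ [0,1). If Q is an adoption rule whose conditional adoption probability satisfies q(a, r) ≤ u·1(r ≤ C) for all (a, r), then for every (θ, P) ∈ 𝓜_DM the risk of the implemented action satisfies E_P[L(δ_Q(Y), θ)] ≤ C + u·α·(1 − C). -/

import Mathlib

open MeasureTheory Set

/-- Proposition 1 (`p_upper_bound`): if `(δ, R)` is a `(1-α)` P-certified decision with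
respect to the decision-maker's model `M`, `u ∈ [0,1]`, `C ∈ [0,1)`, and the conditional
adoption probability satisfies `q(a, r) ≤ u·1(r ≤ C)`, then for every `(θ, P) ∈ M` the
risk of the implemented action is at most `C + u·α·(1 - C)`. -/
theorem statement0
    {Y : Type*} [MeasurableSpace Y] {A : Type*} {Θ : Type*}
    (L : A → Θ → ℝ) (hL : ∀ a θ, L a θ ∈ Icc (0 : ℝ) 1)
    (α : ℝ) (hα : α ∈ Ioo (0 : ℝ) 1)
    (M : Set (Θ × Measure Y))
    (hMprob : ∀ p ∈ M, IsProbabilityMeasure p.2)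
    (δ : Y → A) (R : Y → ℝ) (hR01 : ∀ y, R y ∈ Icc (0 : ℝ) 1)
    (hcert : ∀ p ∈ M, ENNReal.ofReal (1 - α) ≤ p.2 {y | L (δ y) p.1 ≤ R y})
    (u C : ℝ) (hu : u ∈ Icc (0 : ℝ) 1) (hC : C ∈ Ico (0 : ℝ) 1)
    (q : A → ℝ → ℝ) (hq0 : ∀ a r, 0 ≤ q a r)
    (hq : ∀ a r, q a r ≤ u * (if r ≤ C then 1 else 0))
    (hmeasL : ∀ θ : Θ, Measurable fun y => L (δ y) θ)
    (hmeasq : Measurable fun y => q (δ y) (R y)) :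
    ∀ p ∈ M,
      ∫ y, (q (δ y) (R y) * L (δ y) p.1 + (1 - q (δ y) (R y)) * C) ∂p.2
        ≤ C + u * α * (1 - C) := by
  rintro p hp
  obtain ⟨θ, μ⟩ := p
  have hprob : IsProbabilityMeasure μ := hMprob _ hp
  set f : Y → ℝ := fun y => q (δ y) (R y) * (L (δ y) θ - C) with hf
  have hfmeas : Measurable f := hmeasq.mul ((hmeasL θ).sub measurable_const)
  -- q is bounded by u
  have hqu : ∀ y, q (δ y) (R y) ≤ u := fun y => by
    refine (hq _ _).trans ?_
    split_ifs with h
    · simp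
    · simp [hu.1]
  -- f is bounded
  have hfbd : ∀ y, |f y| ≤ 1 := by
    intro y
    have h1 := (hL (δ y) θ).1
    have h2 := (hL (δ y) θ).2
    have h3 := hq0 (δ y) (R y)
    have h4 := hqu y
    have hC0 := hC.1
    have hC1 := hC.2.le
    show |q (δ y) (R y) * (L (δ y) θ - C)| ≤ 1
    rw [abs_le]
    constructor <;> nlinarith [hu.2]
  have hfint : Integrable f μ :=
    ⟨hfmeas.aestronglyMeasurable,
      HasFiniteIntegral.of_bounded (C := 1) (Filter.Eventually.of_forall hfbd)⟩
  -- the bad event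
  set E : Set Y := {y | 0 < f y} with hE
  have hEmeas : MeasurableSet E := measurableSet_lt measurable_const hfmeas
  -- the certification set lies in Eᶜ
  have hGE : {y | L (δ y) θ ≤ R y} ⊆ Eᶜ := by
    intro y hy
    simp only [mem_compl_iff, hE, mem_setOf_eq, not_lt, hf]
    by_cases h : R y ≤ C
    · have : L (δ y) θ - C ≤ 0 := by
        have : L (δ y) θ ≤ R y := hy
        linarith
      exact mul_nonpos_of_nonneg_of_nonpos (hq0 _ _) this
    · have hq' := hq (δ y) (R y)
      rw [if_neg h, mul_zero] at hq'
      have : q (δ y) (R y) = 0 := le_antisymm hq' (hq0 _ _)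
      simp [this]
  -- measure of E is at most α
  have hμE : μ E ≤ ENNReal.ofReal α := by
    have h1 : ENNReal.ofReal (1 - α) ≤ μ Eᶜ :=
      (hcert _ hp).trans (measure_mono hGE)
    have h2 : μ E + μ Eᶜ = 1 := by
      rw [measure_add_measure_compl hEmeas, measure_univ]
    have h3 : μ E ≤ 1 - ENNReal.ofReal (1 - α) := by
      have hE' : μ E = 1 - μ Eᶜ := ENNReal.eq_sub_of_add_eq (measure_ne_top μ _) h2
      rw [hE']
      exact tsub_le_tsub_left h1 1
    refine h3.trans ?_
    rw [show (1 : ENNReal) = ENNReal.ofReal 1 by simp,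
      ← ENNReal.ofReal_sub _ (by linarith [hα.2])]
    norm_num
  have hμEreal : (μ E).toReal ≤ α :=
    ENNReal.toReal_le_of_le_ofReal hα.1.le hμE
  -- pointwise bound f ≤ u(1-C) on E, f ≤ 0 off E
  set g : Y → ℝ := E.indicator (fun _ => u * (1 - C)) with hg
  have hfg : ∀ y, f y ≤ g y := by
    intro y
    by_cases hy : y ∈ E
    · rw [hg, indicator_of_mem hy]
      have hfy : 0 < f y := hy
      have hLC : 0 < L (δ y) θ - C := by
        by_contra h
        push_neg at h
        exact absurd (show (0:ℝ) < q (δ y) (R y) * (L (δ y) θ - C) from hfy)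
          (not_lt.2 (mul_nonpos_of_nonneg_of_nonpos (hq0 _ _) h))
      have : L (δ y) θ - C ≤ 1 - C := by linarith [(hL (δ y) θ).2]
      exact mul_le_mul (hqu y) this hLC.le (by linarith [hu.1, hC.2.le])
    · rw [hg, indicator_of_notMem hy]
      simp only [hE, mem_setOf_eq, not_lt] at hy
      exact hy
  have hgint : Integrable g μ :=
    (integrable_const (u * (1 - C))).indicator hEmeas
  have hintg : ∫ y, g y ∂μ ≤ u * α * (1 - C) := by
    rw [hg, integral_indicator_const _ hEmeas, smul_eq_mul]
    have h0 : 0 ≤ u * (1 - C) := mul_nonneg hu.1 (by linarith [hC.2.le])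
    calc (μ E).toReal * (u * (1 - C)) ≤ α * (u * (1 - C)) := by
          exact mul_le_mul_of_nonneg_right hμEreal h0
      _ = u * α * (1 - C) := by ring
  -- put it all together
  have hrw : ∀ y, q (δ y) (R y) * L (δ y) θ + (1 - q (δ y) (R y)) * C = C + f y := by
    intro y; rw [hf]; ring
  calc ∫ y, (q (δ y) (R y) * L (δ y) θ + (1 - q (δ y) (R y)) * C) ∂μ
      = ∫ y, (C + f y) ∂μ := by exact integral_congr_ae (Filter.Eventually.of_forall hrw)
    _ = C + ∫ y, f y ∂μ := by
        rw [integral_add (integrable_const C) hfint, integral_const, probReal_univ]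
        simp
    _ ≤ C + ∫ y, g y ∂μ := by
        gcongr
        exact hfg
    _ ≤ C + u * α * (1 - C) := by linarith [hintg]
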